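/- Let k ≥ 1 and let C > 0. There exists ρ > 0, depending only on C (and k), such that for every holomorphic map Φ : B^k → ℂ^k with Φ(0) = 0, Φ'(0) = Id, for every z ∈ B^k the derivative Φ'(z) invertible and ‖Φ'(z)‖ · ‖Φ'(z)⁻¹‖ ≤ C, the image Φ(B^k) contains some open Euclidean ball of radius ρ. -/

import Mathlib

open Metric Set

variable {E : Type*} [NormedAddCommGroup E] [NormedSpace ℂ E]
variable {F : Type*} [NormedAddCommGroup F] [NormedSpace ℂ F]

/-- Directional derivative along a complex line. -/
lemma landau_aux_line {Φ : E → F} {z : E} (h : DifferentiableAt ℂ Φ z) (v : E) :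
    HasDerivAt (fun t : ℂ => Φ (z + t • v)) (fderiv ℂ Φ z v) 0 := by
  have h1 : HasDerivAt (fun t : ℂ => z + t • v) v 0 := by
    simpa using ((hasDerivAt_id (0:ℂ)).smul_const v).const_add z
  have h2 : HasFDerivAt Φ (fderiv ℂ Φ z) (z + (0:ℂ) • v) := by simpa using h.hasFDerivAt
  have := h2.comp_hasDerivAt (x := (0:ℂ)) h1
  exact this

/-- Key Lipschitz estimate for `fderiv` of a holomorphic map, via one-variable Schwarz. -/
lemma landau_aux_lip {Φ : E → F} {s : Set E} (hso : IsOpen s) (hΦ : DifferentiableOn ℂ Φ s)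
    {b : E} {R M : ℝ} (hM0 : 0 < M) (hsub : ball b R ⊆ s)
    (hM : ∀ z ∈ ball b R, ‖fderiv ℂ Φ z‖ ≤ M) {ζ : E} (hζ : ζ ∈ ball b R) :
    ‖fderiv ℂ Φ ζ - fderiv ℂ Φ b‖ ≤ 3 * M * ‖ζ - b‖ / R := by
  have hR : 0 < R := lt_of_le_of_lt dist_nonneg (mem_ball.1 hζ)
  set u := ζ - b with hu_def
  refine ContinuousLinearMap.opNorm_le_bound _ (by positivity) fun v => ?_
  rcases eq_or_ne v 0 with rfl | hv
  · simp
  rcases eq_or_ne ζ b with h | hub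
  · subst h
    have : fderiv ℂ Φ ζ - fderiv ℂ Φ ζ = 0 := sub_self _
    rw [this]
    simp only [ContinuousLinearMap.zero_apply, norm_zero]
    positivity
  have hu : u ≠ 0 := sub_ne_zero.2 hub
  have hu0 : 0 < ‖u‖ := norm_pos_iff.2 hu
  have hv0 : 0 < ‖v‖ := norm_pos_iff.2 hv
  have huR : ‖u‖ < R := by simpa [hu_def, dist_eq_norm] using mem_ball.1 hζ
  have hdiff : ∀ z ∈ ball b R, DifferentiableAt ℂ Φ z := fun z hz =>
    hΦ.differentiableAt (hso.mem_nhds (hsub hz))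
  have mv : ∀ z ∈ ball b R, ∀ w ∈ ball b R, ‖Φ w - Φ z‖ ≤ M * ‖w - z‖ := fun z hz w hw =>
    (convex_ball b R).norm_image_sub_le_of_norm_hasFDerivWithin_le
      (fun x hx => (hdiff x hx).hasFDerivAt.hasFDerivWithinAt) hM hz hw
  have key : ∀ h : ℂ, h ≠ 0 → ‖h‖ * ‖v‖ < R - ‖u‖ →
      ‖(h⁻¹ • (Φ (ζ + h • v) - Φ ζ)) - (h⁻¹ • (Φ (b + h • v) - Φ b))‖
        ≤ 3 * M * ‖v‖ * ‖u‖ / (R - ‖h‖ * ‖v‖) := by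
    intro h hh hhR
    have hRh : ‖u‖ < R - ‖h‖ * ‖v‖ := by linarith
    have hRh0 : 0 < R - ‖h‖ * ‖v‖ := lt_trans hu0 hRh
    set r₁ := (R - ‖h‖ * ‖v‖) / ‖u‖ with hr₁
    set g : ℂ → F := fun t => h⁻¹ • (Φ (b + t • u + h • v) - Φ (b + t • u)) with hg
    have hmem1 : ∀ t : ℂ, ‖t‖ < r₁ → b + t • u ∈ ball b R := by
      intro t ht
      rw [mem_ball, dist_eq_norm, add_sub_cancel_left, norm_smul]
      calc ‖t‖ * ‖u‖ < r₁ * ‖u‖ := by gcongr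
        _ = R - ‖h‖ * ‖v‖ := by rw [hr₁, div_mul_cancel₀ _ hu0.ne']
        _ ≤ R := by nlinarith [norm_nonneg h, norm_nonneg v]
    have hmem2 : ∀ t : ℂ, ‖t‖ < r₁ → b + t • u + h • v ∈ ball b R := by
      intro t ht
      rw [mem_ball, dist_eq_norm]
      have : b + t • u + h • v - b = t • u + h • v := by abel
      rw [this]
      calc ‖t • u + h • v‖ ≤ ‖t • u‖ + ‖h • v‖ := norm_add_le _ _
        _ < r₁ * ‖u‖ + ‖h‖ * ‖v‖ := by
            rw [norm_smul, norm_smul]; gcongr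
        _ = R := by rw [hr₁, div_mul_cancel₀ _ hu0.ne']; ring
    have hgd : DifferentiableOn ℂ g (ball 0 r₁) := by
      intro t ht
      have ht' : ‖t‖ < r₁ := by simpa [dist_eq_norm] using mem_ball.1 ht
      have h1 : DifferentiableAt ℂ (fun t : ℂ => Φ (b + t • u + h • v)) t := by
        have : DifferentiableAt ℂ (fun t : ℂ => b + t • u + h • v) t := by
          apply DifferentiableAt.add_const
          exact (differentiableAt_id.smul_const u).const_add b
        exact (hdiff _ (hmem2 t ht')).comp t this
      have h2 : DifferentiableAt ℂ (fun t : ℂ => Φ (b + t • u)) t := by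
        have : DifferentiableAt ℂ (fun t : ℂ => b + t • u) t :=
          (differentiableAt_id.smul_const u).const_add b
        exact (hdiff _ (hmem1 t ht')).comp t this
      exact ((h1.sub h2).const_smul h⁻¹).differentiableWithinAt
    have hgb : ∀ t : ℂ, ‖t‖ < r₁ → ‖g t‖ ≤ M * ‖v‖ := by
      intro t ht
      have := mv _ (hmem1 t ht) _ (hmem2 t ht)
      have heq : b + t • u + h • v - (b + t • u) = h • v := by abel
      rw [heq, norm_smul] at this
      rw [hg]
      simp only [norm_smul, norm_inv]
      calc ‖h‖⁻¹ * ‖Φ (b + t • u + h • v) - Φ (b + t • u)‖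
          ≤ ‖h‖⁻¹ * (M * (‖h‖ * ‖v‖)) := by gcongr
        _ = M * ‖v‖ := by field_simp
    have hmaps : Set.MapsTo g (ball 0 r₁) (ball (g 0) (3 * M * ‖v‖)) := by
      intro t ht
      have ht' : ‖t‖ < r₁ := by simpa [dist_eq_norm] using mem_ball.1 ht
      rw [mem_ball]
      have h0 : ‖(0:ℂ)‖ < r₁ := by rw [norm_zero, hr₁]; exact div_pos hRh0 hu0
      calc dist (g t) (g 0) ≤ ‖g t‖ + ‖g 0‖ := dist_le_norm_add_norm _ _
        _ ≤ M * ‖v‖ + M * ‖v‖ := add_le_add (hgb t ht') (hgb 0 h0)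
        _ < 3 * M * ‖v‖ := by nlinarith
    have h1r : (1:ℂ) ∈ ball (0:ℂ) r₁ := by
      rw [mem_ball, dist_eq_norm, sub_zero, norm_one, hr₁, lt_div_iff₀ hu0, one_mul]
      exact hRh
    have hSch := Complex.dist_le_div_mul_dist_of_mapsTo_ball hgd (hmaps.mono_right ball_subset_closedBall) h1r
    have hd10 : dist (1:ℂ) 0 = 1 := by simp
    rw [hd10, mul_one] at hSch
    have hbu : b + u = ζ := by rw [hu_def]; abel
    have hgeq1 : g 1 = h⁻¹ • (Φ (ζ + h • v) - Φ ζ) := by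
      rw [hg]; simp only [one_smul]; rw [hbu]
    have hgeq0 : g 0 = h⁻¹ • (Φ (b + h • v) - Φ b) := by
      rw [hg]; simp
    rw [dist_eq_norm, hgeq1, hgeq0] at hSch
    calc ‖h⁻¹ • (Φ (ζ + h • v) - Φ ζ) - h⁻¹ • (Φ (b + h • v) - Φ b)‖
        ≤ 3 * M * ‖v‖ / r₁ := hSch
      _ = 3 * M * ‖v‖ * ‖u‖ / (R - ‖h‖ * ‖v‖) := by
          rw [hr₁]; field_simp
  have hDlim : Filter.Tendsto
      (fun h : ℂ => (h⁻¹ • (Φ (ζ + h • v) - Φ ζ)) - (h⁻¹ • (Φ (b + h • v) - Φ b)))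
      (nhdsWithin (0:ℂ) {(0:ℂ)}ᶜ) (nhds (fderiv ℂ Φ ζ v - fderiv ℂ Φ b v)) := by
    have t1 := landau_aux_line (hdiff ζ hζ) v
    have t2 := landau_aux_line (hdiff b (mem_ball_self hR)) v
    have s1 := hasDerivAt_iff_tendsto_slope.1 t1
    have s2 := hasDerivAt_iff_tendsto_slope.1 t2
    refine (s1.sub s2).congr fun h => ?_
    simp [slope_def_module]
  have hcont : Continuous fun h : ℂ => ‖h‖ * ‖v‖ := (continuous_norm.mul continuous_const)
  have hRlim : Filter.Tendsto (fun h : ℂ => 3 * M * ‖v‖ * ‖u‖ / (R - ‖h‖ * ‖v‖))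
      (nhdsWithin (0:ℂ) {(0:ℂ)}ᶜ) (nhds (3 * M * ‖v‖ * ‖u‖ / R)) := by
    have hden : Filter.Tendsto (fun h : ℂ => R - ‖h‖ * ‖v‖) (nhds 0) (nhds R) := by
      have : Continuous fun h : ℂ => R - ‖h‖ * ‖v‖ := continuous_const.sub hcont
      simpa using this.tendsto (0:ℂ)
    exact Filter.Tendsto.div tendsto_const_nhds (hden.mono_left nhdsWithin_le_nhds) hR.ne'
  have hsmall : ∀ᶠ h : ℂ in nhds 0, ‖h‖ * ‖v‖ < R - ‖u‖ := by
    have h0 : Filter.Tendsto (fun h : ℂ => ‖h‖ * ‖v‖) (nhds 0) (nhds 0) := by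
      simpa using hcont.tendsto (0:ℂ)
    exact h0.eventually_lt_const (by linarith)
  have hfinal : ‖fderiv ℂ Φ ζ v - fderiv ℂ Φ b v‖ ≤ 3 * M * ‖v‖ * ‖u‖ / R := by
    refine le_of_tendsto_of_tendsto hDlim.norm hRlim ?_
    filter_upwards [hsmall.filter_mono nhdsWithin_le_nhds, self_mem_nhdsWithin] with h h1 h2
    exact key h h2 h1
  calc ‖(fderiv ℂ Φ ζ - fderiv ℂ Φ b) v‖ = ‖fderiv ℂ Φ ζ v - fderiv ℂ Φ b v‖ := by
        simp [ContinuousLinearMap.sub_apply]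
    _ ≤ 3 * M * ‖v‖ * ‖u‖ / R := hfinal
    _ = 3 * M * ‖u‖ / R * ‖v‖ := by ring

/-- Cauchy-type bound on the derivative from a bound on the function. -/
lemma landau_aux_cauchy {Φ : E → F} {z : E} {sR K : ℝ} (hs : 0 < sR)
    (hd : DifferentiableOn ℂ Φ (ball z sR))
    (hmaps : Set.MapsTo Φ (ball z sR) (ball (Φ z) K)) :
    ‖fderiv ℂ Φ z‖ ≤ K / sR := by
  have hK : 0 < K := dist_nonneg.trans_lt (mem_ball.1 (hmaps (mem_ball_self hs)))
  refine ContinuousLinearMap.opNorm_le_bound _ (by positivity) fun v => ?_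
  rcases eq_or_ne v 0 with rfl | hv
  · simp
  have hv0 : 0 < ‖v‖ := norm_pos_iff.2 hv
  set g : ℂ → F := fun t => Φ (z + t • v) with hgdef
  have hmem : ∀ t : ℂ, t ∈ ball (0:ℂ) (sR / ‖v‖) → z + t • v ∈ ball z sR := by
    intro t ht
    rw [mem_ball, dist_eq_norm, add_sub_cancel_left, norm_smul]
    have ht' : ‖t‖ < sR / ‖v‖ := by simpa using mem_ball.1 ht
    calc ‖t‖ * ‖v‖ < sR / ‖v‖ * ‖v‖ := by gcongr
      _ = sR := by field_simp
  have hgd : DifferentiableOn ℂ g (ball 0 (sR / ‖v‖)) := by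
    intro t ht
    have h1 : DifferentiableAt ℂ (fun t : ℂ => z + t • v) t :=
      (differentiableAt_id.smul_const v).const_add z
    exact ((hd.differentiableAt (isOpen_ball.mem_nhds (hmem t ht))).comp t
      h1).differentiableWithinAt
  have hg0 : g 0 = Φ z := by simp [hgdef]
  have hmapsg : Set.MapsTo g (ball 0 (sR / ‖v‖)) (ball (g 0) K) := by
    intro t ht
    rw [hg0]
    exact hmaps (hmem t ht)
  have hb := Complex.norm_deriv_le_div_of_mapsTo_ball hgd (hmapsg.mono_right ball_subset_closedBall) (div_pos hs hv0)
  have hD : HasDerivAt g (fderiv ℂ Φ z v) 0 :=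
    landau_aux_line (hd.differentiableAt (isOpen_ball.mem_nhds (mem_ball_self hs))) v
  rw [hD.deriv] at hb
  calc ‖fderiv ℂ Φ z v‖ ≤ K / (sR / ‖v‖) := hb
    _ = K / sR * ‖v‖ := by field_simp

/-- The derivative of a holomorphic map is continuous. -/
lemma landau_aux_cont [ProperSpace E] {Φ : E → F} {s : Set E} (hso : IsOpen s)
    (hΦ : DifferentiableOn ℂ Φ s) : ContinuousOn (fun z => fderiv ℂ Φ z) s := by
  intro b hb
  refine ContinuousAt.continuousWithinAt ?_
  obtain ⟨δ, hδ0, hδsub⟩ := (Metric.nhds_basis_closedBall.mem_iff).1 (hso.mem_nhds hb)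
  set ε := δ / 3 with hε
  have hε0 : 0 < ε := by positivity
  have hεsub : closedBall b (3 * ε) ⊆ s := by
    refine subset_trans ?_ hδsub
    apply closedBall_subset_closedBall
    rw [hε]; linarith
  obtain ⟨Cb, hCb⟩ := (isCompact_closedBall b (3 * ε)).exists_bound_of_continuousOn
    (hΦ.continuousOn.mono hεsub)
  have hCb0 : 0 ≤ Cb := le_trans (norm_nonneg _) (hCb b (by simp [mem_closedBall]; positivity))
  set M' := (2 * Cb + 1) / ε with hM'
  have hM'0 : 0 < M' := by rw [hM']; positivity
  have hball : ball b ε ⊆ s := fun x hx =>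
    hεsub (closedBall_subset_closedBall (by linarith) (ball_subset_closedBall hx))
  have hbound : ∀ z ∈ ball b ε, ‖fderiv ℂ Φ z‖ ≤ M' := by
    intro z hz
    have hsub2 : ball z ε ⊆ closedBall b (3 * ε) := by
      intro w hw
      rw [mem_closedBall]
      calc dist w b ≤ dist w z + dist z b := dist_triangle _ _ _
        _ ≤ ε + ε := add_le_add (le_of_lt (mem_ball.1 hw)) (le_of_lt (mem_ball.1 hz))
        _ ≤ 3 * ε := by linarith
    have hmaps : Set.MapsTo Φ (ball z ε) (ball (Φ z) (2 * Cb + 1)) := by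
      intro w hw
      rw [mem_ball, dist_eq_norm]
      calc ‖Φ w - Φ z‖ ≤ ‖Φ w‖ + ‖Φ z‖ := norm_sub_le _ _
        _ ≤ Cb + Cb := add_le_add (hCb w (hsub2 hw)) (hCb z (hsub2 (mem_ball_self hε0)))
        _ < 2 * Cb + 1 := by linarith
    have := landau_aux_cauchy hε0 (hΦ.mono (subset_trans hsub2 hεsub)) hmaps
    rwa [← hM'] at this
  refine continuousAt_of_locally_lipschitz hε0 (3 * M' / ε) fun y hy => ?_
  have hy' : y ∈ ball b ε := mem_ball.1 hy
  have := landau_aux_lip hso hΦ hM'0 hball hbound hy'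
  rw [dist_eq_norm, dist_eq_norm]
  calc ‖fderiv ℂ Φ y - fderiv ℂ Φ b‖ ≤ 3 * M' * ‖y - b‖ / ε := this
    _ = 3 * M' / ε * ‖y - b‖ := by ring


set_option maxHeartbeats 2000000 in
/-- **Landau's theorem** (Theorem 3.1). For every `k ≥ 1` and `C > 0` there is a universal
`ρ > 0` such that every holomorphic map `Φ : 𝔹ᵏ → ℂᵏ` with `Φ(0) = 0`, `Φ'(0) = Id` and
`‖Φ'(z)‖ ⬝ ‖Φ'(z)⁻¹‖ ≤ C` on `𝔹ᵏ` has an open ball of radius `ρ` in its image. -/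
theorem landau (k : ℕ) (hk : 1 ≤ k) (C : ℝ) (hC : 0 < C) :
    ∃ ρ > (0 : ℝ), ∀ Φ : EuclideanSpace ℂ (Fin k) → EuclideanSpace ℂ (Fin k),
      DifferentiableOn ℂ Φ (ball (0 : EuclideanSpace ℂ (Fin k)) 1) →
      Φ 0 = 0 →
      fderiv ℂ Φ 0 = ContinuousLinearMap.id ℂ (EuclideanSpace ℂ (Fin k)) →
      (∀ z ∈ ball (0 : EuclideanSpace ℂ (Fin k)) 1,
        IsUnit (fderiv ℂ Φ z) ∧ ‖fderiv ℂ Φ z‖ * ‖Ring.inverse (fderiv ℂ Φ z)‖ ≤ C) →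
      ∃ a : EuclideanSpace ℂ (Fin k),
        ball a ρ ⊆ Φ '' (ball (0 : EuclideanSpace ℂ (Fin k)) 1) := by
  haveI : Nonempty (Fin k) := ⟨⟨0, hk⟩⟩
  set E := EuclideanSpace ℂ (Fin k) with hE
  set C' := max C 1 with hC'def
  have hC'1 : 1 ≤ C' := le_max_right _ _
  have hC'0 : 0 < C' := lt_of_lt_of_le one_pos hC'1
  have hCC' : C ≤ C' := le_max_left _ _
  refine ⟨(128 * C' ^ 2)⁻¹, by positivity, ?_⟩
  intro Φ hΦ hΦ0 hΦ'0 hdist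
  -- Step 1: maximize (1/2 - ‖z‖) * ‖Φ'(z)‖ over the closed ball of radius 1/2
  have hKsub : closedBall (0 : E) (1/2) ⊆ ball (0 : E) 1 :=
    closedBall_subset_ball (by norm_num)
  set u : E → ℝ := fun z => (1/2 - ‖z‖) * ‖fderiv ℂ Φ z‖ with hu
  have hucont : ContinuousOn u (closedBall (0 : E) (1/2)) := by
    exact (continuous_const.sub continuous_norm).continuousOn.mul
      ((landau_aux_cont isOpen_ball hΦ).norm.mono hKsub)
  obtain ⟨a, haK, hamax⟩ := (isCompact_closedBall (0 : E) (1/2)).exists_isMaxOn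
    ⟨0, by simp⟩ hucont
  have hid : ‖fderiv ℂ Φ 0‖ = 1 := by rw [hΦ'0]; exact ContinuousLinearMap.norm_id
  have hu0 : u 0 = 1/2 := by simp [hu, hid]
  have hua : 1/2 ≤ u a := by
    have h00 : u 0 ≤ u a := hamax (by simp : (0:E) ∈ closedBall (0:E) (1/2))
    rwa [hu0] at h00
  set M := ‖fderiv ℂ Φ a‖ with hM
  set d := 1/2 - ‖a‖ with hd
  have ha2 : ‖a‖ ≤ 1/2 := by simpa [mem_closedBall, dist_eq_norm] using haK
  have ha0 : 0 ≤ ‖a‖ := norm_nonneg a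
  have huaeq : u a = d * M := rfl
  have hdM : 1/2 ≤ d * M := by rw [← huaeq]; exact hua
  have hd2 : d ≤ 1/2 := by rw [hd]; linarith
  have hM0 : 0 ≤ M := norm_nonneg _
  have hd0 : 0 < d := by nlinarith
  have hMpos : 0 < M := by nlinarith
  have hM1 : 1 ≤ M := by nlinarith
  set R := d / 2 with hR
  have hR0 : 0 < R := half_pos hd0
  -- points of ball a R
  have hball_norm : ∀ z ∈ ball a R, ‖z‖ < 1/2 - R := by
    intro z hz
    have : ‖z - a‖ < R := by rw [mem_ball, dist_eq_norm] at hz; exact hz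
    calc ‖z‖ = ‖(z - a) + a‖ := by rw [sub_add_cancel]
      _ ≤ ‖z - a‖ + ‖a‖ := norm_add_le _ _
      _ < R + ‖a‖ := by linarith
      _ = 1/2 - R := by rw [hR, hd]; ring
  have hsub1 : ball a R ⊆ ball (0 : E) 1 := by
    intro z hz
    rw [mem_ball, dist_zero_right]
    have := hball_norm z hz
    linarith
  have hM' : ∀ z ∈ ball a R, ‖fderiv ℂ Φ z‖ ≤ 2 * M := by
    intro z hz
    have hzn := hball_norm z hz
    have hzK : z ∈ closedBall (0:E) (1/2) := by
      rw [mem_closedBall, dist_zero_right]; linarith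
    have h1 : (1/2 - ‖z‖) * ‖fderiv ℂ Φ z‖ ≤ d * M := by
      have := hamax hzK
      rwa [huaeq] at this
    have h2 : R < 1/2 - ‖z‖ := by linarith
    have hdR : d = 2 * R := by rw [hR]; ring
    nlinarith [norm_nonneg (fderiv ℂ Φ z)]
  have hlip : ∀ ζ ∈ ball a R, ‖fderiv ℂ Φ ζ - fderiv ℂ Φ a‖ ≤ 3 * (2*M) * ‖ζ - a‖ / R :=
    fun ζ hζ => landau_aux_lip isOpen_ball hΦ (by positivity) hsub1 hM' hζ
  -- the invertibility hypothesis at `a`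
  have haball : a ∈ ball (0:E) 1 := by rw [mem_ball, dist_zero_right]; linarith
  obtain ⟨hunit, hCb⟩ := hdist a haball
  obtain ⟨U, hU⟩ := hunit
  set N : ContinuousLinearMap.NonlinearRightInverse (fderiv ℂ Φ a) :=
    { toFun := fun y => (↑U⁻¹ : E →L[ℂ] E) y
      nnnorm := ‖(↑U⁻¹ : E →L[ℂ] E)‖₊
      bound' := fun y => ContinuousLinearMap.le_opNorm _ y
      right_inv' := fun y => by
        rw [← hU]
        show (↑(U * U⁻¹) : E →L[ℂ] E) y = y
        rw [mul_inv_cancel, Units.val_one, ContinuousLinearMap.one_apply] } with hN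
  set r := R / (24 * C') with hr
  have hr0 : 0 < r := by rw [hr]; positivity
  have hrR : closedBall a r ⊆ ball a R := by
    apply closedBall_subset_ball
    rw [hr]
    exact div_lt_self hR0 (by linarith)
  set cNN : NNReal := ⟨M / (4 * C'), by positivity⟩ with hcNNdef
  have hcNN : (cNN : ℝ) = M / (4 * C') := rfl
  have happrox : ApproximatesLinearOn Φ (fderiv ℂ Φ a) (closedBall a r) cNN := by
    intro x hx y hy
    have hbound : ∀ z ∈ closedBall a r, ‖fderiv ℂ Φ z - fderiv ℂ Φ a‖ ≤ M / (4 * C') := by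
      intro z hz
      have hzr : ‖z - a‖ ≤ r := by rw [mem_closedBall, dist_eq_norm] at hz; exact hz
      calc ‖fderiv ℂ Φ z - fderiv ℂ Φ a‖ ≤ 3 * (2*M) * ‖z - a‖ / R := hlip z (hrR hz)
        _ ≤ 3 * (2*M) * r / R := by gcongr
        _ = M / (4 * C') := by rw [hr]; field_simp; ring
    have mvb := (convex_closedBall a r).norm_image_sub_le_of_norm_hasFDerivWithin_le
      (f := fun z => Φ z - (fderiv ℂ Φ a) z) (f' := fun z => fderiv ℂ Φ z - fderiv ℂ Φ a)
      (fun z hz => ((hΦ.differentiableAt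
        (isOpen_ball.mem_nhds (hsub1 (hrR hz)))).hasFDerivAt.sub
        ((fderiv ℂ Φ a).hasFDerivAt)).hasFDerivWithinAt)
      hbound hy hx
    have heq : Φ x - Φ y - (fderiv ℂ Φ a) (x - y)
        = (Φ x - (fderiv ℂ Φ a) x) - (Φ y - (fderiv ℂ Φ a) y) := by
      rw [map_sub]; abel
    rw [heq]
    calc ‖(Φ x - (fderiv ℂ Φ a) x) - (Φ y - (fderiv ℂ Φ a) y)‖
        ≤ M / (4 * C') * ‖x - y‖ := mvb
      _ = (cNN : ℝ) * ‖x - y‖ := by rw [hcNN]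
  -- bounds on the nonlinear right inverse
  have hRinv : Ring.inverse (fderiv ℂ Φ a) = (↑U⁻¹ : E →L[ℂ] E) := by
    rw [← hU, Ring.inverse_unit]
  have hNval : (N.nnnorm : ℝ) = ‖(↑U⁻¹ : E →L[ℂ] E)‖ := rfl
  have hinvne : (↑U⁻¹ : E →L[ℂ] E) ≠ 0 := by
    intro h0
    have h1 : ((↑(U⁻¹ * U) : E →L[ℂ] E)) = 0 := by
      rw [Units.val_mul, h0, zero_mul]
    rw [inv_mul_cancel] at h1
    exact one_ne_zero (α := E →L[ℂ] E) (by rw [← Units.val_one]; exact h1)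
  have hinvpos : 0 < ‖(↑U⁻¹ : E →L[ℂ] E)‖ := norm_pos_iff.2 hinvne
  have hNpos : 0 < (N.nnnorm : ℝ) := by rw [hNval]; exact hinvpos
  have hNle : (N.nnnorm : ℝ) ≤ C' / M := by
    rw [hNval, ← hRinv, le_div_iff₀ hMpos]
    have : M * ‖Ring.inverse (fderiv ℂ Φ a)‖ ≤ C := hCb
    nlinarith [norm_nonneg (Ring.inverse (fderiv ℂ Φ a))]
  have hNinv_ge : M / C' ≤ ((N.nnnorm : ℝ))⁻¹ := by
    have h := inv_anti₀ hNpos hNle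
    rwa [inv_div] at h
  have hsurj := happrox.surjOn_closedBall_of_nonlinearRightInverse N (le_of_lt hr0)
    (subset_refl _)
  have hrd : r = d / (48 * C') := by rw [hr, hR]; ring
  have hrad : (128 * C' ^ 2)⁻¹ ≤ (((N.nnnorm : ℝ))⁻¹ - (cNN : ℝ)) * r := by
    have h3 : 3 * M / (4 * C') ≤ ((N.nnnorm : ℝ))⁻¹ - (cNN : ℝ) := by
      rw [hcNN]
      have heq2 : M / C' - M / (4 * C') = 3 * M / (4 * C') := by field_simp [hC'0.ne']; ring
      linarith [hNinv_ge]
    calc (128 * C' ^ 2)⁻¹ = (1/2) * (1 / (64 * C' ^ 2)) := by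
          rw [inv_eq_one_div]; ring
      _ ≤ (M * d) * (1 / (64 * C' ^ 2)) := by gcongr; nlinarith
      _ = (3 * M / (4 * C')) * (d / (48 * C')) := by field_simp [hC'0.ne']; ring
      _ ≤ (((N.nnnorm : ℝ))⁻¹ - (cNN : ℝ)) * (d / (48 * C')) := by
          apply mul_le_mul_of_nonneg_right h3 (by positivity)
      _ = (((N.nnnorm : ℝ))⁻¹ - (cNN : ℝ)) * r := by rw [hrd]
  refine ⟨Φ a, fun y hy => ?_⟩
  have hy' : y ∈ closedBall (Φ a) ((((N.nnnorm : ℝ))⁻¹ - (cNN : ℝ)) * r) := by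
    rw [mem_closedBall]
    exact le_trans (le_of_lt (mem_ball.1 hy)) hrad
  obtain ⟨x, hx, hxy⟩ := hsurj hy'
  refine ⟨x, ?_, hxy⟩
  have hxa : ‖x - a‖ ≤ r := by simpa [mem_closedBall, dist_eq_norm] using hx
  have hrR' : r ≤ R := by
    rw [hr]
    exact div_le_self hR0.le (by linarith)
  have hxn : ‖x‖ ≤ r + ‖a‖ := by
    calc ‖x‖ = ‖(x - a) + a‖ := by rw [sub_add_cancel]
      _ ≤ ‖x - a‖ + ‖a‖ := norm_add_le _ _
      _ ≤ r + ‖a‖ := by linarith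
  rw [mem_ball, dist_zero_right]
  have hR4 : R ≤ 1/4 := by rw [hR]; linarith
  linarith
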